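/- Let g : ℝᵈ → ℝ be differentiable, K-Lipschitz, G-smooth (∇g is G-Lipschitz), and bounded by r > 0. Then the gradient of V_σ(x) = −log F_σ(x) + ‖x‖²/2, given by ∇V_σ(x) = (∇g(x)/σ)(1 − F_σ(x)) + x, is L_σ-Lipschitz with L_σ = e^{(-μ+r)/σ} K²/σ² + 2G/σ + 1. -/

import Mathlib

noncomputable def Fsig {E : Type*} (g : E → ℝ) (σ μ : ℝ) (x : E) : ℝ :=
  (1 + Real.exp ((-μ + g x) / σ))⁻¹

lemma aux_exp_lip (s t M : ℝ) (hs : s ≤ M) (ht : t ≤ M) :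
    |Real.exp s - Real.exp t| ≤ Real.exp M * |s - t| := by
  wlog h : t ≤ s generalizing s t
  · rw [abs_sub_comm, abs_sub_comm s t]; exact this t s ht hs (le_of_not_ge h)
  rw [abs_of_nonneg (sub_nonneg.2 (Real.exp_le_exp.2 h)),
    abs_of_nonneg (sub_nonneg.2 h)]
  have h1 : Real.exp s * ((t - s) + 1) ≤ Real.exp t := by
    have h2 := Real.add_one_le_exp (t - s)
    calc Real.exp s * ((t - s) + 1) ≤ Real.exp s * Real.exp (t - s) := by
          nlinarith [Real.exp_pos s]
      _ = Real.exp t := by rw [← Real.exp_add]; ring_nf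
  have h3 : Real.exp s ≤ Real.exp M := Real.exp_le_exp.2 hs
  nlinarith [sub_nonneg.2 h, Real.exp_pos s]

lemma aux_inv_lip (s t M : ℝ) (hs : s ≤ M) (ht : t ≤ M) :
    |(1 + Real.exp s)⁻¹ - (1 + Real.exp t)⁻¹| ≤ Real.exp M * |s - t| := by
  have ps : (0:ℝ) < 1 + Real.exp s := by positivity
  have pt : (0:ℝ) < 1 + Real.exp t := by positivity
  have heq : (1 + Real.exp s)⁻¹ - (1 + Real.exp t)⁻¹
      = (Real.exp t - Real.exp s) / ((1 + Real.exp s) * (1 + Real.exp t)) := by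
    field_simp; ring
  rw [heq, abs_div]
  have hd : 1 ≤ |(1 + Real.exp s) * (1 + Real.exp t)| := by
    rw [abs_of_pos (by positivity)]
    nlinarith [Real.exp_pos s, Real.exp_pos t]
  calc |Real.exp t - Real.exp s| / |(1 + Real.exp s) * (1 + Real.exp t)|
      ≤ |Real.exp t - Real.exp s| := div_le_self (abs_nonneg _) hd
    _ ≤ Real.exp M * |t - s| := aux_exp_lip t s M ht hs
    _ = Real.exp M * |s - t| := by rw [abs_sub_comm]

theorem stmt14 {d : ℕ} (g : EuclideanSpace ℝ (Fin d) → ℝ)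
    (g' : EuclideanSpace ℝ (Fin d) → EuclideanSpace ℝ (Fin d))
    (K G r σ μ : ℝ) (hr : 0 < r) (hσ : 0 < σ) (hμ : 0 < μ)
    (hgrad : ∀ x, HasGradientAt g (g' x) x)
    (hlip : ∀ x y, |g x - g y| ≤ K * ‖x - y‖)
    (hKbd : ∀ x, ‖g' x‖ ≤ K)
    (hsmooth : ∀ x y, ‖g' x - g' y‖ ≤ G * ‖x - y‖)
    (hbd : ∀ x, |g x| ≤ r) :
    ∀ x y,
      ‖((σ⁻¹ * (1 - Fsig g σ μ x)) • g' x + x)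
        - ((σ⁻¹ * (1 - Fsig g σ μ y)) • g' y + y)‖
      ≤ (Real.exp ((-μ + r) / σ) * K ^ 2 / σ ^ 2 + 2 * G / σ + 1) * ‖x - y‖ := by
  intro x y
  have hK : 0 ≤ K := le_trans (norm_nonneg _) (hKbd x)
  by_cases hxy : x = y
  · subst hxy; simp
  have hnxy : 0 < ‖x - y‖ := by
    rw [norm_pos_iff]; exact sub_ne_zero.2 hxy
  have hG : 0 ≤ G := by
    have h := le_trans (norm_nonneg _) (hsmooth x y)
    nlinarith
  set M : ℝ := (-μ + r) / σ with hMdef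
  -- bounds on Fsig
  have hFbd : ∀ z : EuclideanSpace ℝ (Fin d), 0 ≤ Fsig g σ μ z ∧ Fsig g σ μ z ≤ 1 := by
    intro z
    unfold Fsig
    refine ⟨by positivity, ?_⟩
    rw [inv_le_one_iff₀]; right; nlinarith [Real.exp_pos ((-μ + g z) / σ)]
  have hM : ∀ z : EuclideanSpace ℝ (Fin d), (-μ + g z) / σ ≤ M := by
    intro z
    have := (abs_le.1 (hbd z)).2
    exact div_le_div_of_nonneg_right (by linarith) hσ.le
  -- Lipschitz of Fsig
  have hFlip : |Fsig g σ μ x - Fsig g σ μ y| ≤ Real.exp M * (K / σ) * ‖x - y‖ := by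
    have h1 := aux_inv_lip ((-μ + g x) / σ) ((-μ + g y) / σ) M (hM x) (hM y)
    have h2 : |(-μ + g x) / σ - (-μ + g y) / σ| = |g x - g y| / σ := by
      rw [div_sub_div_same, abs_div, abs_of_pos hσ]
      ring_nf
    have h3 : |g x - g y| / σ ≤ K * ‖x - y‖ / σ :=
      div_le_div_of_nonneg_right (hlip x y) hσ.le
    unfold Fsig
    calc |(1 + Real.exp ((-μ + g x) / σ))⁻¹ - (1 + Real.exp ((-μ + g y) / σ))⁻¹|
        ≤ Real.exp M * |(-μ + g x) / σ - (-μ + g y) / σ| := h1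
      _ = Real.exp M * (|g x - g y| / σ) := by rw [h2]
      _ ≤ Real.exp M * (K * ‖x - y‖ / σ) :=
          mul_le_mul_of_nonneg_left h3 (Real.exp_pos M).le
      _ = Real.exp M * (K / σ) * ‖x - y‖ := by ring
  -- decomposition
  have key : ((σ⁻¹ * (1 - Fsig g σ μ x)) • g' x + x)
        - ((σ⁻¹ * (1 - Fsig g σ μ y)) • g' y + y)
      = (σ⁻¹ * (1 - Fsig g σ μ x)) • (g' x - g' y)
        + (σ⁻¹ * (1 - Fsig g σ μ x) - σ⁻¹ * (1 - Fsig g σ μ y)) • g' y + (x - y) := by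
    rw [smul_sub, sub_smul]; abel
  rw [key]
  have hb1 : ‖(σ⁻¹ * (1 - Fsig g σ μ x)) • (g' x - g' y)‖ ≤ σ⁻¹ * (G * ‖x - y‖) := by
    rw [norm_smul]
    have h1 : |σ⁻¹ * (1 - Fsig g σ μ x)| ≤ σ⁻¹ := by
      rw [abs_mul, abs_of_pos (inv_pos.2 hσ)]
      have h0 := hFbd x
      have h2 : |1 - Fsig g σ μ x| ≤ 1 := abs_le.2 ⟨by linarith [h0.2], by linarith [h0.1]⟩
      nlinarith [inv_pos.2 hσ]
    rw [Real.norm_eq_abs]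
    exact mul_le_mul h1 (hsmooth x y) (norm_nonneg _) (inv_pos.2 hσ).le
  have hb2 : ‖(σ⁻¹ * (1 - Fsig g σ μ x) - σ⁻¹ * (1 - Fsig g σ μ y)) • g' y‖
      ≤ σ⁻¹ * (Real.exp M * (K / σ) * ‖x - y‖) * K := by
    rw [norm_smul]
    have h1 : ‖σ⁻¹ * (1 - Fsig g σ μ x) - σ⁻¹ * (1 - Fsig g σ μ y)‖
        = σ⁻¹ * |Fsig g σ μ y - Fsig g σ μ x| := by
      rw [Real.norm_eq_abs]
      rw [show σ⁻¹ * (1 - Fsig g σ μ x) - σ⁻¹ * (1 - Fsig g σ μ y)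
        = σ⁻¹ * (Fsig g σ μ y - Fsig g σ μ x) by ring, abs_mul, abs_of_pos (inv_pos.2 hσ)]
    rw [h1, abs_sub_comm]
    apply mul_le_mul ?_ (hKbd y) (norm_nonneg _) (by positivity)
    exact mul_le_mul_of_nonneg_left hFlip (inv_pos.2 hσ).le
  calc ‖(σ⁻¹ * (1 - Fsig g σ μ x)) • (g' x - g' y)
        + (σ⁻¹ * (1 - Fsig g σ μ x) - σ⁻¹ * (1 - Fsig g σ μ y)) • g' y + (x - y)‖
      ≤ ‖(σ⁻¹ * (1 - Fsig g σ μ x)) • (g' x - g' y)‖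
        + ‖(σ⁻¹ * (1 - Fsig g σ μ x) - σ⁻¹ * (1 - Fsig g σ μ y)) • g' y‖
        + ‖x - y‖ := norm_add₃_le
    _ ≤ σ⁻¹ * (G * ‖x - y‖) + σ⁻¹ * (Real.exp M * (K / σ) * ‖x - y‖) * K + ‖x - y‖ := by
        linarith
    _ ≤ (Real.exp M * K ^ 2 / σ ^ 2 + 2 * G / σ + 1) * ‖x - y‖ := by
        have hσ' : (0:ℝ) < σ⁻¹ := inv_pos.2 hσ
        have he : σ⁻¹ * (Real.exp M * (K / σ) * ‖x - y‖) * K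
            = Real.exp M * K ^ 2 / σ ^ 2 * ‖x - y‖ := by
          field_simp
        rw [he]
        have h2 : σ⁻¹ * (G * ‖x - y‖) ≤ 2 * G / σ * ‖x - y‖ := by
          rw [div_eq_mul_inv]
          nlinarith [mul_nonneg (mul_nonneg hG hσ'.le) hnxy.le]
        nlinarith [h2]
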